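/- Let K be a field with char K = 2 and let t, t' ∈ K*. Then the algebras S(0, t, t, 0, t, 1) and S(0, t', t', 0, t', 1) are isomorphic if and only if t + t' = x² + x for some x ∈ K. -/

import Mathlib

/-- Multiplication of the 2-dimensional algebra `S(p,q,a,b,c,d)` on `K × K`,
with basis `e = (1,0)`, `f = (0,1)` and table
`e*e = f`, `f*f = p•e + q•f`, `e*f = a•e + b•f`, `f*e = c•e + d•f`. -/
def mulS {K : Type*} [Field K] (p q a b c d : K) (u v : K × K) : K × K :=
  (u.1 * v.2 * a + u.2 * v.1 * c + u.2 * v.2 * p,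
   u.1 * v.1 + u.1 * v.2 * b + u.2 * v.1 * d + u.2 * v.2 * q)

/-- `S(p,q,a,b,c,d)` is endo-commutative: `(x*x)*(y*y) = (x*y)*(x*y)`. -/
def EndoComm {K : Type*} [Field K] (p q a b c d : K) : Prop :=
  ∀ u v : K × K,
    mulS p q a b c d (mulS p q a b c d u u) (mulS p q a b c d v v) =
      mulS p q a b c d (mulS p q a b c d u v) (mulS p q a b c d u v)

/-- `S(p,q,a,b,c,d)` and `S(p',q',a',b',c',d')` are isomorphic: there is a bijective
`K`-linear map between them preserving multiplication. -/
def IsoS {K : Type*} [Field K] (p q a b c d p' q' a' b' c' d' : K) : Prop :=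
  ∃ φ : (K × K) ≃ₗ[K] (K × K),
    ∀ u v : K × K,
      φ (mulS p q a b c d u v) = mulS p' q' a' b' c' d' (φ u) (φ v)

theorem iso_II1_11_char_two_iff {K : Type*} [Field K] [CharP K 2]
    (t t' : K) (ht : t ≠ 0) (ht' : t' ≠ 0) :
    IsoS 0 t t 0 t 1 0 t' t' 0 t' 1 ↔ ∃ x : K, t + t' = x ^ 2 + x := by
  have h2K : (2:K) = 0 := by exact_mod_cast (CharP.cast_eq_zero K 2)
  constructor
  · rintro ⟨φ, h⟩
    have h1 := h (1,0) (1,0)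
    have h3 := h (0,1) (1,0)
    have h2 := h (0,1) (0,1)
    simp only [mulS] at h1 h2 h3
    norm_num at h1 h2 h3
    set A := φ (1,0) with hA
    set B := φ (0,1) with hB
    have hBne : B ≠ 0 := by
      intro hc
      have : ((0:K),(1:K)) = 0 := φ.injective (by rw [map_zero]; exact hc)
      simp [Prod.ext_iff] at this
    have e2 : φ ((0:K), t) = t • B := by
      rw [show ((0:K), t) = t • ((0:K),(1:K)) by simp, map_smul]
    have e3 : φ ((t:K), (1:K)) = t • A + B := by
      rw [show ((t:K), (1:K)) = t • ((1:K),(0:K)) + ((0:K),(1:K)) by simp, map_add, map_smul]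
    rw [e2] at h2
    rw [e3] at h3
    rw [Prod.ext_iff] at h1 h2 h3
    simp only [Prod.smul_fst, Prod.smul_snd, Prod.fst_add, Prod.snd_add, smul_eq_mul]
      at h1 h2 h3
    obtain ⟨h1a, h1b⟩ := h1
    obtain ⟨h2a, h2b⟩ := h2
    obtain ⟨h3a, h3b⟩ := h3
    have hB1 : B.1 = 0 := by linear_combination h1a + t' * A.1 * A.2 * h2K
    have hB2 : B.2 ≠ 0 := by
      intro hc; exact hBne (Prod.ext hB1 hc)
    have htB : t = t' * B.2 := by
      have : B.2 * t = B.2 * (t' * B.2) := by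
        linear_combination h2b + hB1 * (B.1 + B.2)
      exact mul_left_cancel₀ hB2 this
    have hA1 : A.1 = 1 := by
      have : B.2 * A.1 = B.2 * 1 := by
        linear_combination -h3b + A.1 * hB1 + A.2 * htB - A.1 * B.1 * h2K
      exact mul_left_cancel₀ hB2 this
    refine ⟨t' * A.2, ?_⟩
    linear_combination t' * h1b + (t' * A.2 + 2*t' + t' * (A.1 - 1)) * hA1 + htB + t' * h2K
  · rintro ⟨x, hx⟩
    obtain ⟨β, hβ⟩ : ∃ b : K, b = x / t' := ⟨_, rfl⟩
    obtain ⟨δ, hδ⟩ : ∃ d : K, d = t / t' := ⟨_, rfl⟩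
    have hδne : δ ≠ 0 := hδ ▸ div_ne_zero ht ht'
    have hδt : t' * δ = t := by rw [hδ]; field_simp
    have hβx : t' * β = x := by rw [hβ]; field_simp
    have hkey : δ = 1 + β + t' * β ^ 2 := by
      rw [hδ, hβ]
      field_simp
      ring_nf
      linear_combination hx - t' * h2K
    refine ⟨{ toFun := fun u => (u.1, β * u.1 + δ * u.2),
              invFun := fun v => (v.1, (v.2 - β * v.1) / δ),
              map_add' := by intro u v; ext <;> dsimp <;> ring
              map_smul' := by intro c u; ext <;> dsimp <;> ring
              left_inv := by
                intro u; ext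
                · rfl
                · show (β * u.1 + δ * u.2 - β * u.1) / δ = u.2
                  rw [show β * u.1 + δ * u.2 - β * u.1 = δ * u.2 from by ring,
                    mul_div_cancel_left₀ _ hδne]
              right_inv := by
                intro v; ext
                · rfl
                · show β * v.1 + δ * ((v.2 - β * v.1) / δ) = v.2
                  field_simp; ring }, ?_⟩
    intro u v
    simp only [mulS, LinearEquiv.coe_mk, Equiv.coe_fn_mk, LinearMap.coe_mk, AddHom.coe_mk]
    rw [Prod.ext_iff]
    constructor
    · linear_combination (-(u.1*v.2 + u.2*v.1)) * hδt - t' * β * u.1 * v.1 * h2K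
    · linear_combination (-(β*(u.1*v.2+u.2*v.1)) - δ*u.2*v.2) * hδt + u.1*v.1 * hkey
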